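/- arXiv:quant-ph/0510022 — 6 statements merged into one kernel-verified Lean document; each statement's English description precedes it below -/
import Mathlib

section
/- Let φ₀, φ₁ be unit vectors in ℂ² with 0 < |⟨φ₀, φ₁⟩| < 1, let p₀, p₁ > 0 be real numbers, and let C be a 2×2 complex matrix with Tr(C) ≠ 0. Then it is impossible that both the 4×4 block matrix ρ = [[p₀·φ₀φ₀†, Cᴴ],[C, p₁·φ₁φ₁†]] and its partial transpose with respect to the first (block) factor, ρ^{T_A} = [[p₀·φ₀φ₀†, C],[Cᴴ, p₁·φ₁φ₁†]], are positive semidefinite. (Equivalently: a bipartite state whose two conditional states on Bob's side are pure, non-identical and non-orthogonal, and whose off-diagonal block has nonzero trace, cannot be PPT, hence cannot be separable.) -/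
open Matrix
open scoped ComplexOrder

private lemma block_kill_left {n : Type*} [Fintype n] [DecidableEq n]
    {A B C D : Matrix n n ℂ} (h : (fromBlocks A B C D).PosSemidef)
    {x : n → ℂ} (hx : A *ᵥ x = 0) : C *ᵥ x = 0 := by
  have hq : star (Sum.elim x (0 : n → ℂ)) ⬝ᵥ (fromBlocks A B C D) *ᵥ (Sum.elim x 0) = 0 := by
    simp [Function.star_sumElim, fromBlocks_mulVec, sumElim_dotProduct_sumElim, hx]
  have hz := (h.dotProduct_mulVec_zero_iff _).mp hq
  rw [fromBlocks_mulVec] at hz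
  funext i
  have := congrFun hz (Sum.inr i)
  simpa using this

private lemma block_kill_right {n : Type*} [Fintype n] [DecidableEq n]
    {A B C D : Matrix n n ℂ} (h : (fromBlocks A B C D).PosSemidef)
    {x : n → ℂ} (hx : D *ᵥ x = 0) : B *ᵥ x = 0 := by
  have hq : star (Sum.elim (0 : n → ℂ) x) ⬝ᵥ (fromBlocks A B C D) *ᵥ (Sum.elim 0 x) = 0 := by
    simp [Function.star_sumElim, fromBlocks_mulVec, sumElim_dotProduct_sumElim, hx]
  have hz := (h.dotProduct_mulVec_zero_iff _).mp hq
  rw [fromBlocks_mulVec] at hz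
  funext i
  have := congrFun hz (Sum.inl i)
  simpa using this

/-- A bipartite qubit-qubit state whose two conditional states on
Bob's side are pure, non-identical and non-orthogonal (i.e. `0 < |⟨φ₀,φ₁⟩| < 1`),
and whose off-diagonal block `C` has nonzero trace, cannot have both itself and
its partial transpose (w.r.t. the first block factor) positive semidefinite. -/
theorem pure_conditional_states_not_ppt
    (φ₀ φ₁ : Fin 2 → ℂ)
    (hunit₀ : star φ₀ ⬝ᵥ φ₀ = 1) (hunit₁ : star φ₁ ⬝ᵥ φ₁ = 1)
    (hover_pos : 0 < ‖star φ₀ ⬝ᵥ φ₁‖)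
    (hover_lt : ‖star φ₀ ⬝ᵥ φ₁‖ < 1)
    (p₀ p₁ : ℝ) (hp₀ : 0 < p₀) (hp₁ : 0 < p₁)
    (C : Matrix (Fin 2) (Fin 2) ℂ) (hC : C.trace ≠ 0) :
    ¬ ((Matrix.fromBlocks ((p₀ : ℂ) • Matrix.vecMulVec φ₀ (star φ₀)) Cᴴ
          C ((p₁ : ℂ) • Matrix.vecMulVec φ₁ (star φ₁))).PosSemidef ∧
       (Matrix.fromBlocks ((p₀ : ℂ) • Matrix.vecMulVec φ₀ (star φ₀)) C
          Cᴴ ((p₁ : ℂ) • Matrix.vecMulVec φ₁ (star φ₁))).PosSemidef) := by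
  rintro ⟨h1, h2⟩
  -- the determinant of the 2×2 matrix with columns φ₀, φ₁ is nonzero
  have hd : φ₀ 0 * φ₁ 1 - φ₀ 1 * φ₁ 0 ≠ 0 := by
    intro h
    have hu0 : (starRingEnd ℂ) (φ₀ 0) * φ₀ 0 + (starRingEnd ℂ) (φ₀ 1) * φ₀ 1 = 1 := by
      simpa [dotProduct, Fin.sum_univ_two] using hunit₀
    have hu1 : (starRingEnd ℂ) (φ₁ 0) * φ₁ 0 + (starRingEnd ℂ) (φ₁ 1) * φ₁ 1 = 1 := by
      simpa [dotProduct, Fin.sum_univ_two] using hunit₁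
    have hsh : (starRingEnd ℂ) (φ₀ 0) * (starRingEnd ℂ) (φ₁ 1)
        - (starRingEnd ℂ) (φ₀ 1) * (starRingEnd ℂ) (φ₁ 0) = 0 := by
      have := congrArg (starRingEnd ℂ) h
      simpa [map_sub, _root_.map_mul] using this
    have hexp : star φ₀ ⬝ᵥ φ₁
        = (starRingEnd ℂ) (φ₀ 0) * φ₁ 0 + (starRingEnd ℂ) (φ₀ 1) * φ₁ 1 := by
      simp [dotProduct, Fin.sum_univ_two]
    have hs1 : (star φ₀ ⬝ᵥ φ₁) * (starRingEnd ℂ) (star φ₀ ⬝ᵥ φ₁) = 1 := by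
      rw [hexp]
      simp only [map_add, _root_.map_mul, Complex.conj_conj]
      linear_combination ((starRingEnd ℂ) (φ₁ 0) * φ₁ 0 + (starRingEnd ℂ) (φ₁ 1) * φ₁ 1) * hu0
        + hu1 - (φ₀ 0 * φ₁ 1 - φ₀ 1 * φ₁ 0) * hsh
    rw [Complex.mul_conj] at hs1
    have h2' : Complex.normSq (star φ₀ ⬝ᵥ φ₁) = 1 := by exact_mod_cast hs1
    have habs : ‖star φ₀ ⬝ᵥ φ₁‖ ^ 2 = 1 := by rw [Complex.sq_norm, h2']
    nlinarith [hover_lt, hover_pos]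
  -- test vectors orthogonal to φ₀ and φ₁
  set x₀ : Fin 2 → ℂ := ![star (φ₀ 1), -star (φ₀ 0)] with hx₀
  set x₁ : Fin 2 → ℂ := ![star (φ₁ 1), -star (φ₁ 0)] with hx₁
  have hA0 : ((p₀ : ℂ) • Matrix.vecMulVec φ₀ (star φ₀)) *ᵥ x₀ = 0 := by
    funext i
    simp [mulVec, dotProduct, vecMulVec, Fin.sum_univ_two, hx₀]
    ring
  have hD1 : ((p₁ : ℂ) • Matrix.vecMulVec φ₁ (star φ₁)) *ᵥ x₁ = 0 := by
    funext i
    simp [mulVec, dotProduct, vecMulVec, Fin.sum_univ_two, hx₁]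
    ring
  have hC0 : C *ᵥ x₀ = 0 := block_kill_left h1 hA0
  have hC1 : C *ᵥ x₁ = 0 := block_kill_right h2 hD1
  -- hence C = 0 entrywise, contradicting trace ≠ 0
  have hsd : (starRingEnd ℂ) (φ₀ 0) * (starRingEnd ℂ) (φ₁ 1)
      - (starRingEnd ℂ) (φ₀ 1) * (starRingEnd ℂ) (φ₁ 0) ≠ 0 := by
    intro h
    apply hd
    have := congrArg (starRingEnd ℂ) h
    simpa [map_sub, _root_.map_mul] using this
  have entry : ∀ i, C i 0 = 0 ∧ C i 1 = 0 := by
    intro i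
    have E0 : C i 0 * (starRingEnd ℂ) (φ₀ 1) - C i 1 * (starRingEnd ℂ) (φ₀ 0) = 0 := by
      have := congrFun hC0 i
      simp [mulVec, dotProduct, Fin.sum_univ_two, hx₀] at this
      linear_combination this
    have E1 : C i 0 * (starRingEnd ℂ) (φ₁ 1) - C i 1 * (starRingEnd ℂ) (φ₁ 0) = 0 := by
      have := congrFun hC1 i
      simp [mulVec, dotProduct, Fin.sum_univ_two, hx₁] at this
      linear_combination this
    constructor
    · have hz : C i 0 * ((starRingEnd ℂ) (φ₀ 0) * (starRingEnd ℂ) (φ₁ 1)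
          - (starRingEnd ℂ) (φ₀ 1) * (starRingEnd ℂ) (φ₁ 0)) = 0 := by
        linear_combination (starRingEnd ℂ) (φ₀ 0) * E1 - (starRingEnd ℂ) (φ₁ 0) * E0
      exact (mul_eq_zero.mp hz).resolve_right hsd
    · have hz : C i 1 * ((starRingEnd ℂ) (φ₀ 0) * (starRingEnd ℂ) (φ₁ 1)
          - (starRingEnd ℂ) (φ₀ 1) * (starRingEnd ℂ) (φ₁ 0)) = 0 := by
        linear_combination (starRingEnd ℂ) (φ₀ 1) * E1 - (starRingEnd ℂ) (φ₁ 1) * E0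
      exact (mul_eq_zero.mp hz).resolve_right hsd
  apply hC
  rw [Matrix.trace_fin_two, (entry 0).1, (entry 1).2, add_zero]
end

section
/- Let p₀ > 0 be real, let E₁₁ denote the 2×2 matrix with a 1 in the (1,1) entry and 0 elsewhere, let σ be any 2×2 complex matrix, and let C be a 2×2 complex matrix. If the 4×4 block matrix ρ = [[p₀·E₁₁, Cᴴ],[C, σ]] is positive semidefinite and its partial transpose with respect to the block factor, [[p₀·E₁₁, C],[Cᴴ, σ]], is also positive semidefinite, then C = (Tr C)·E₁₁, i.e. all entries of C vanish except the (1,1) entry, which equals Tr C. -/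
open Matrix
open scoped ComplexOrder

lemma psd_row_zero {n : Type*} [Fintype n] [DecidableEq n]
    {M : Matrix n n ℂ} (hM : M.PosSemidef) {i : n} (hii : M i i = 0) (j : n) :
    M j i = 0 := by
  have h := (hM.dotProduct_mulVec_zero_iff (Pi.single i 1)).mp ?_
  · have := congrFun h j
    simpa [mulVec_single] using this
  · simp [dotProduct, mulVec_single, Pi.single_apply, hii]

/-- If `ρ = [[p₀·E₁₁, Cᴴ],[C, σ]]` and its partial transpose
`[[p₀·E₁₁, C],[Cᴴ, σ]]` are both positive semidefinite, then all entries of `C`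
vanish except the (1,1) entry, i.e. `C = (Tr C) · E₁₁`. -/
theorem ppt_forces_offdiagonal_block_concentrated
    (p₀ : ℝ) (hp₀ : 0 < p₀)
    (σ C : Matrix (Fin 2) (Fin 2) ℂ)
    (E₁₁ : Matrix (Fin 2) (Fin 2) ℂ)
    (hE : E₁₁ = Matrix.single 0 0 1)
    (hρ : (Matrix.fromBlocks ((p₀ : ℂ) • E₁₁) Cᴴ C σ).PosSemidef)
    (hρTA : (Matrix.fromBlocks ((p₀ : ℂ) • E₁₁) C Cᴴ σ).PosSemidef) :
    C = C.trace • E₁₁ := by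
  have hdiag : (Matrix.fromBlocks ((p₀ : ℂ) • E₁₁) Cᴴ C σ)
      (Sum.inl 1) (Sum.inl 1) = 0 := by
    simp [hE, Matrix.single]
  have hdiag' : (Matrix.fromBlocks ((p₀ : ℂ) • E₁₁) C Cᴴ σ)
      (Sum.inl 1) (Sum.inl 1) = 0 := by
    simp [hE, Matrix.single]
  -- from hρ: C j 1 = 0
  have h1 : ∀ j : Fin 2, C j 1 = 0 := by
    intro j
    have := psd_row_zero hρ hdiag (Sum.inr j)
    simpa using this
  -- from hρTA: row Sum.inr j, entry is Cᴴ j 1 = conj (C 1 j) = 0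
  have h2 : ∀ j : Fin 2, C 1 j = 0 := by
    intro j
    have := psd_row_zero hρTA hdiag' (Sum.inr j)
    simp [Matrix.conjTranspose_apply] at this
    simpa using congrArg (starRingEnd ℂ) this
  have htr : C.trace = C 0 0 := by
    simp [Matrix.trace_fin_two, h1 1]
  ext i j
  fin_cases i <;> fin_cases j <;>
    simp [hE, htr, Matrix.single, h1, h2]
end

section
/- Let H be a complex Hilbert space, let X and Y be self-adjoint bounded (continuous) linear operators on H, and let v ∈ H be a unit vector such that (X∘Y − Y∘X) v = i·v. Define the 3×3 complex matrix η by η = [[1, ⟨X⟩, ⟨Y⟩],[⟨X⟩, ⟨X²⟩, ⟨S(XY)⟩],[⟨Y⟩, ⟨S(XY)⟩, ⟨Y²⟩]], where ⟨A⟩ := ⟪v, A v⟫ and S(XY) := (X∘Y + Y∘X)/2 (all these expectation values are real). Then the matrix η + (i/2)·J̃ is positive semidefinite. -/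
open Matrix
open scoped ComplexOrder InnerProductSpace

/-- For self-adjoint bounded operators `X`, `Y` on a complex Hilbert
space and a unit vector `v` with `(XY - YX) v = i·v`, the expectation value matrix
`η = [[1, ⟨X⟩, ⟨Y⟩],[⟨X⟩, ⟨X²⟩, ⟨S(XY)⟩],[⟨Y⟩, ⟨S(XY)⟩, ⟨Y²⟩]]` satisfies
`η + (i/2)·J̃ ≥ 0`, where `J̃` has only nonzero entries `(J̃)₂₃ = -1`, `(J̃)₃₂ = 1`. -/
theorem evm_uncertainty_psd
    {H : Type*} [NormedAddCommGroup H] [InnerProductSpace ℂ H] [CompleteSpace H]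
    (X Y : H →L[ℂ] H) (hX : IsSelfAdjoint X) (hY : IsSelfAdjoint Y)
    (v : H) (hv : ‖v‖ = 1)
    (hccr : (X ∘L Y - Y ∘L X) v = Complex.I • v)
    (η : Matrix (Fin 3) (Fin 3) ℂ)
    (hη : η = !![1, ⟪v, X v⟫_ℂ, ⟪v, Y v⟫_ℂ;
                 ⟪v, X v⟫_ℂ, ⟪v, X (X v)⟫_ℂ, ⟪v, ((2 : ℂ)⁻¹ • (X ∘L Y + Y ∘L X)) v⟫_ℂ;
                 ⟪v, Y v⟫_ℂ, ⟪v, ((2 : ℂ)⁻¹ • (X ∘L Y + Y ∘L X)) v⟫_ℂ, ⟪v, Y (Y v)⟫_ℂ])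
    (Jt : Matrix (Fin 3) (Fin 3) ℂ)
    (hJ : Jt = !![0, 0, 0; 0, 0, -1; 0, 1, 0]) :
    (η + (Complex.I / 2) • Jt).PosSemidef := by
  -- basic facts
  have hXadj : ∀ u w : H, ⟪X u, w⟫_ℂ = ⟪u, X w⟫_ℂ := by
    intro u w
    conv_lhs => rw [← hX.adjoint_eq]
    exact ContinuousLinearMap.adjoint_inner_left X w u
  have hYadj : ∀ u w : H, ⟪Y u, w⟫_ℂ = ⟪u, Y w⟫_ℂ := by
    intro u w
    conv_lhs => rw [← hY.adjoint_eq]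
    exact ContinuousLinearMap.adjoint_inner_left Y w u
  have hvv : ⟪v, v⟫_ℂ = 1 := by
    rw [inner_self_eq_norm_sq_to_K, hv]; norm_num
  -- commutator expectation
  have hcomm : ⟪v, X (Y v)⟫_ℂ - ⟪v, Y (X v)⟫_ℂ = Complex.I := by
    have h := congrArg (fun w => ⟪v, w⟫_ℂ) hccr
    simpa [inner_sub_right, inner_smul_right, hvv, -inner_self_eq_norm_sq_to_K] using h
  -- the vectors whose Gram matrix this is
  set f : Fin 3 → H := ![v, X v, Y v] with hf
  have hM : ∀ j k, (η + (Complex.I / 2) • Jt) j k = ⟪f k, f j⟫_ℂ := by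
    intro j k
    fin_cases j <;> fin_cases k <;>
      simp [hη, hJ, hf, hvv, inner_add_right, inner_smul_right, hXadj, hYadj,
        Matrix.vecHead, Matrix.vecTail, -inner_self_eq_norm_sq_to_K] <;>
      first
        | linear_combination ((2:ℂ)⁻¹) * hcomm
        | linear_combination (-(2:ℂ)⁻¹) * hcomm
  refine Matrix.posSemidef_iff_dotProduct_mulVec.mpr ⟨?_, ?_⟩
  · -- Hermitian
    ext j k
    simp only [Matrix.conjTranspose_apply, hM j k, hM k j, RCLike.star_def]
    exact inner_conj_symm (𝕜 := ℂ) (f k) (f j)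
  · intro x
    set w : H := (starRingEnd ℂ (x 0)) • f 0 + (starRingEnd ℂ (x 1)) • f 1
        + (starRingEnd ℂ (x 2)) • f 2 with hw
    have key : star x ⬝ᵥ (η + (Complex.I / 2) • Jt) *ᵥ x = ⟪w, w⟫_ℂ := by
      simp only [dotProduct, Matrix.mulVec, Fin.sum_univ_three, Pi.star_apply,
        hM, hw, inner_add_left, inner_add_right, inner_smul_left, inner_smul_right,
        RCLike.star_def, RingHomCompTriple.comp_apply, map_add, _root_.map_mul,
        Complex.conj_conj, RingHom.id_apply]
      ring
    rw [key, inner_self_eq_norm_sq_to_K]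
    calc (0:ℂ) ≤ ((‖w‖ ^ 2 : ℝ) : ℂ) := Complex.zero_le_real.mpr (sq_nonneg ‖w‖)
      _ = (‖w‖ : ℂ) ^ 2 := by push_cast; ring
end

section
/- Let p₁, …, p_N be nonnegative real numbers, let A₁, …, A_N be 2×2 complex positive semidefinite matrices, and let η₁, …, η_N be 3×3 complex Hermitian matrices such that η_k + (i/2)·J̃ and η_k − (i/2)·J̃ are positive semidefinite for every k. Define χ := Σ_k p_k · (A_k ⊗ η_k) and ρ_A := Σ_k p_k · A_k. Then both χ + (i/2)·(ρ_A ⊗ J̃) and χ − (i/2)·(ρ_A ⊗ J̃) are positive semidefinite; in particular χ itself is positive semidefinite. -/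
open Matrix Kronecker
open scoped ComplexOrder

lemma kron_conjTranspose {m n p q : Type*} (A : Matrix m n ℂ) (B : Matrix p q ℂ) :
    (A ⊗ₖ B)ᴴ = Aᴴ ⊗ₖ Bᴴ := by
  ext ⟨i, j⟩ ⟨k, l⟩
  simp [Matrix.conjTranspose_apply, mul_comm]

lemma posSemidef_kron {m n : Type*} [Fintype m] [Fintype n] [DecidableEq m] [DecidableEq n]
    {A : Matrix m m ℂ} {B : Matrix n n ℂ} (hA : A.PosSemidef) (hB : B.PosSemidef) :
    (A ⊗ₖ B).PosSemidef := by
  exact hA.kronecker hB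

lemma posSemidef_sum {n : Type*} [Fintype n] [DecidableEq n] {N : ℕ}
    (f : Fin N → Matrix n n ℂ) (hf : ∀ k, (f k).PosSemidef) :
    (∑ k, f k).PosSemidef := by
  induction N with
  | zero => simpa using Matrix.PosSemidef.zero
  | succ N ih =>
    rw [Fin.sum_univ_succ]
    exact (hf 0).add (ih _ fun k => hf _)

lemma posSemidef_real_smul {n : Type*} [Fintype n] {M : Matrix n n ℂ}
    (hM : M.PosSemidef) {c : ℝ} (hc : 0 ≤ c) : ((c : ℂ) • M).PosSemidef := by
  constructor
  · unfold Matrix.IsHermitian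
    rw [Matrix.conjTranspose_smul, hM.1.eq]
    congr 1
    simp [Complex.ext_iff]
  · intro x
    convert mul_nonneg (by exact_mod_cast hc : (0:ℂ) ≤ c) (hM.2 x) using 1
    simp only [Matrix.smul_apply, smul_eq_mul, Finsupp.mul_sum]
    refine Finsupp.sum_congr fun i _ => Finsupp.sum_congr fun j _ => ?_
    ring

/-- Observation 2: For a separable combination
`χ = Σ_k p_k (A_k ⊗ η_k)` with `p_k ≥ 0`, `A_k` PSD and `η_k` Hermitian with
`η_k ± (i/2)·J̃ ≥ 0`, letting `ρ_A = Σ_k p_k A_k`, one has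
`χ ± (i/2)·(ρ_A ⊗ J̃) ≥ 0`; in particular `χ ≥ 0`. -/
theorem separable_evm_condition
    (N : ℕ) (p : Fin N → ℝ) (hp : ∀ k, 0 ≤ p k)
    (A : Fin N → Matrix (Fin 2) (Fin 2) ℂ) (hA : ∀ k, (A k).PosSemidef)
    (η : Fin N → Matrix (Fin 3) (Fin 3) ℂ) (hη : ∀ k, (η k).IsHermitian)
    (Jt : Matrix (Fin 3) (Fin 3) ℂ)
    (hJ : Jt = !![0, 0, 0; 0, 0, -1; 0, 1, 0])
    (hplus : ∀ k, (η k + (Complex.I / 2) • Jt).PosSemidef)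
    (hminus : ∀ k, (η k - (Complex.I / 2) • Jt).PosSemidef)
    (χ : Matrix (Fin 2 × Fin 3) (Fin 2 × Fin 3) ℂ)
    (hχ : χ = ∑ k, (p k : ℂ) • (A k ⊗ₖ η k))
    (ρA : Matrix (Fin 2) (Fin 2) ℂ)
    (hρA : ρA = ∑ k, (p k : ℂ) • A k) :
    (χ + (Complex.I / 2) • (ρA ⊗ₖ Jt)).PosSemidef ∧
      (χ - (Complex.I / 2) • (ρA ⊗ₖ Jt)).PosSemidef ∧
      χ.PosSemidef := by
  subst hχ hρA
  have key : ∀ s : ℂ,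
      ((∑ k, (p k : ℂ) • (A k ⊗ₖ η k)) + s • ((∑ k, (p k : ℂ) • A k) ⊗ₖ Jt))
        = ∑ k, (p k : ℂ) • (A k ⊗ₖ (η k + s • Jt)) := by
    intro s
    ext ⟨i, a⟩ ⟨j, b⟩
    simp only [Matrix.add_apply, Matrix.sum_apply, Matrix.smul_apply,
      Matrix.kroneckerMap_apply, smul_eq_mul, Finset.sum_mul, Finset.mul_sum]
    rw [← Finset.sum_add_distrib]
    refine Finset.sum_congr rfl fun k _ => ?_
    ring
  have hp' : ∀ k, ((p k : ℂ) • (A k ⊗ₖ (η k + (Complex.I/2) • Jt))).PosSemidef :=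
    fun k => posSemidef_real_smul (posSemidef_kron (hA k) (hplus k)) (hp k)
  have hm' : ∀ k, ((p k : ℂ) • (A k ⊗ₖ (η k - (Complex.I/2) • Jt))).PosSemidef :=
    fun k => posSemidef_real_smul (posSemidef_kron (hA k) (hminus k)) (hp k)
  have h1 : ((∑ k, (p k : ℂ) • (A k ⊗ₖ η k)) + (Complex.I/2) • ((∑ k, (p k : ℂ) • A k) ⊗ₖ Jt)).PosSemidef := by
    rw [key]; exact posSemidef_sum _ hp'
  have h2 : ((∑ k, (p k : ℂ) • (A k ⊗ₖ η k)) - (Complex.I/2) • ((∑ k, (p k : ℂ) • A k) ⊗ₖ Jt)).PosSemidef := by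
    have hk := key (-(Complex.I/2))
    rw [neg_smul, ← sub_eq_add_neg] at hk
    rw [hk]
    refine _root_.posSemidef_sum _ fun k => ?_
    have : η k + (-(Complex.I/2)) • Jt = η k - (Complex.I/2) • Jt := by
      rw [neg_smul, ← sub_eq_add_neg]
    rw [this]; exact hm' k
  refine ⟨h1, h2, ?_⟩
  have hchi : (∑ k, (p k : ℂ) • (A k ⊗ₖ η k))
      = (Complex.ofReal 2⁻¹) • (((∑ k, (p k : ℂ) • (A k ⊗ₖ η k)) + (Complex.I/2) • ((∑ k, (p k : ℂ) • A k) ⊗ₖ Jt))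
        + ((∑ k, (p k : ℂ) • (A k ⊗ₖ η k)) - (Complex.I/2) • ((∑ k, (p k : ℂ) • A k) ⊗ₖ Jt))) := by
    rw [add_add_sub_cancel]
    push_cast
    module
  rw [hchi]
  exact posSemidef_real_smul (h1.add h2) (by norm_num)
end

section
/- Let ρ_A be a 2×2 complex matrix with real entries satisfying ρ_Aᵀ = ρ_A, and let X be a 6×6 complex Hermitian matrix such that both X + (i/2)·(ρ_A ⊗ J̃) and X − (i/2)·(ρ_A ⊗ J̃) are positive semidefinite. Define X̄ := (X + Xᵀ)/2, which equals the entrywise real part of X. Then: (a) X̄ is a real symmetric matrix; (b) both X̄ + (i/2)·(ρ_A ⊗ J̃) and X̄ − (i/2)·(ρ_A ⊗ J̃) are positive semidefinite; (c) X̄ agrees with X in every entry of X that is real; in particular, if the two diagonal 3×3 blocks of X are real matrices and the (1,4) and (4,1) entries of X are real, then X̄ has the same diagonal 3×3 blocks and the same (1,4) and (4,1) entries as X. -/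
open Matrix
open scoped ComplexOrder

private lemma psd_add {n : Type*} [Fintype n] {A B : Matrix n n ℂ}
    (hA : A.PosSemidef) (hB : B.PosSemidef) : (A + B).PosSemidef := by
  refine posSemidef_iff_dotProduct_mulVec.mpr ⟨hA.1.add hB.1, fun x => ?_⟩
  rw [add_mulVec, dotProduct_add]
  exact add_nonneg (hA.dotProduct_mulVec_nonneg x) (hB.dotProduct_mulVec_nonneg x)

private lemma psd_half {n : Type*} [Fintype n] {A : Matrix n n ℂ}
    (hA : A.PosSemidef) : ((2 : ℂ)⁻¹ • A).PosSemidef := by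
  have h2 : (0 : ℂ) ≤ (2 : ℂ)⁻¹ := by
    rw [Complex.le_def]; norm_num
  refine posSemidef_iff_dotProduct_mulVec.mpr ⟨?_, fun x => ?_⟩
  · unfold Matrix.IsHermitian
    rw [conjTranspose_smul, hA.1]
    congr 1
    simp
  · rw [smul_mulVec, dotProduct_smul, smul_eq_mul]
    exact mul_nonneg h2 (hA.dotProduct_mulVec_nonneg x)

/-- The Kronecker product `ρ ⊗ J` of a 2×2 matrix with a 3×3 matrix, written as a
6×6 matrix in 3×3 blocks: `[[ρ₀₀·J, ρ₀₁·J],[ρ₁₀·J, ρ₁₁·J]]`. -/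
def kronBlock (ρ : Matrix (Fin 2) (Fin 2) ℂ) (J : Matrix (Fin 3) (Fin 3) ℂ) :
    Matrix (Fin 3 ⊕ Fin 3) (Fin 3 ⊕ Fin 3) ℂ :=
  Matrix.fromBlocks (ρ 0 0 • J) (ρ 0 1 • J) (ρ 1 0 • J) (ρ 1 1 • J)

/-- Lemma 1: If `ρ_A` is real symmetric and the Hermitian 6×6
matrix `X` satisfies `X ± (i/2)·(ρ_A ⊗ J̃) ≥ 0`, then `X̄ := (X + Xᵀ)/2` (which is
the entrywise real part of `X`) is (a) real symmetric, (b) satisfies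
`X̄ ± (i/2)·(ρ_A ⊗ J̃) ≥ 0`, and (c) agrees with `X` in every real entry of `X`;
in particular if the diagonal 3×3 blocks of `X` and its (1,4) and (4,1) entries
are real, then `X̄` has the same diagonal blocks and the same (1,4),(4,1) entries. -/
theorem real_solution_of_solution
    (ρA : Matrix (Fin 2) (Fin 2) ℂ)
    (hreal : ∀ i j, (ρA i j).im = 0) (hsym : ρAᵀ = ρA)
    (Jt : Matrix (Fin 3) (Fin 3) ℂ)
    (hJ : Jt = !![0, 0, 0; 0, 0, -1; 0, 1, 0])
    (X : Matrix (Fin 3 ⊕ Fin 3) (Fin 3 ⊕ Fin 3) ℂ) (hX : X.IsHermitian)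
    (hplus : (X + (Complex.I / 2) • kronBlock ρA Jt).PosSemidef)
    (hminus : (X - (Complex.I / 2) • kronBlock ρA Jt).PosSemidef)
    (Xbar : Matrix (Fin 3 ⊕ Fin 3) (Fin 3 ⊕ Fin 3) ℂ)
    (hXbar : Xbar = (2 : ℂ)⁻¹ • (X + Xᵀ)) :
    -- `X̄` is the entrywise real part of `X`
    (∀ i j, Xbar i j = ((X i j).re : ℂ)) ∧
    -- (a) `X̄` is real and symmetric
    (∀ i j, (Xbar i j).im = 0) ∧ Xbarᵀ = Xbar ∧
    -- (b) the separability constraints still hold for `X̄`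
    (Xbar + (Complex.I / 2) • kronBlock ρA Jt).PosSemidef ∧
    (Xbar - (Complex.I / 2) • kronBlock ρA Jt).PosSemidef ∧
    -- (c) `X̄` agrees with `X` in every real entry
    (∀ i j, (X i j).im = 0 → Xbar i j = X i j) ∧
    -- in particular: same real diagonal blocks and real (1,4),(4,1) entries
    (((∀ k l, (X.toBlocks₁₁ k l).im = 0) ∧ (∀ k l, (X.toBlocks₂₂ k l).im = 0) ∧
        (X (Sum.inl 0) (Sum.inr 0)).im = 0 ∧ (X (Sum.inr 0) (Sum.inl 0)).im = 0) →
      (Xbar.toBlocks₁₁ = X.toBlocks₁₁ ∧ Xbar.toBlocks₂₂ = X.toBlocks₂₂ ∧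
        Xbar (Sum.inl 0) (Sum.inr 0) = X (Sum.inl 0) (Sum.inr 0) ∧
        Xbar (Sum.inr 0) (Sum.inl 0) = X (Sum.inr 0) (Sum.inl 0))) := by
  -- transpose of X via hermiticity
  have hXt : ∀ i j, Xᵀ i j = star (X i j) := by
    intro i j
    have := congrFun (congrFun hX j) i
    simpa [Matrix.conjTranspose_apply] using this.symm
  have hre : ∀ i j, Xbar i j = ((X i j).re : ℂ) := by
    intro i j
    rw [hXbar]
    simp only [Matrix.smul_apply, Matrix.add_apply, hXt i j, smul_eq_mul]
    rw [Complex.star_def, Complex.add_conj]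
    push_cast
    ring
  have hJt : Jtᵀ = -Jt := by
    subst hJ; ext i j
    fin_cases i <;> fin_cases j <;>
      simp [Matrix.transpose_apply, Matrix.neg_apply, Matrix.vecHead, Matrix.vecTail]
  have hKt : (kronBlock ρA Jt)ᵀ = -kronBlock ρA Jt := by
    have h01 : ρA 1 0 = ρA 0 1 := by
      have := congrFun (congrFun hsym 0) 1
      simpa [Matrix.transpose_apply] using this
    unfold kronBlock
    rw [Matrix.fromBlocks_transpose, Matrix.fromBlocks_neg]
    simp only [Matrix.transpose_smul, hJt, smul_neg, h01]
  set M := (Complex.I / 2) • kronBlock ρA Jt with hM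
  have hMt : Mᵀ = -M := by
    rw [hM, Matrix.transpose_smul, hKt, smul_neg]
  have key : Xbar + M = (2 : ℂ)⁻¹ • ((X + M) + (X - M)ᵀ) := by
    rw [hXbar, Matrix.transpose_sub, hMt]
    ext i j
    simp only [Matrix.add_apply, Matrix.smul_apply, Matrix.sub_apply, Matrix.neg_apply,
      smul_eq_mul]
    ring
  have key' : Xbar - M = (2 : ℂ)⁻¹ • ((X - M) + (X + M)ᵀ) := by
    rw [hXbar, Matrix.transpose_add, hMt]
    ext i j
    simp only [Matrix.add_apply, Matrix.smul_apply, Matrix.sub_apply, Matrix.neg_apply,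
      smul_eq_mul]
    ring
  have hbplus : (Xbar + M).PosSemidef := by
    rw [key]; exact psd_half (psd_add hplus hminus.transpose)
  have hbminus : (Xbar - M).PosSemidef := by
    rw [key']; exact psd_half (psd_add hminus hplus.transpose)
  have hagree : ∀ i j, (X i j).im = 0 → Xbar i j = X i j := by
    intro i j h
    rw [hre i j, ← Complex.re_add_im (X i j), h]
    simp
  refine ⟨hre, fun i j => by rw [hre i j]; simp, ?_, hbplus, hbminus, hagree, ?_⟩
  · ext i j
    rw [Matrix.transpose_apply, hre i j, hre j i]
    have := hXt i j
    rw [Matrix.transpose_apply] at this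
    rw [this]
    simp
  · rintro ⟨h11, h22, h14, h41⟩
    refine ⟨?_, ?_, hagree _ _ h14, hagree _ _ h41⟩
    · ext k l
      exact hagree (Sum.inl k) (Sum.inl l) (h11 k l)
    · ext k l
      exact hagree (Sum.inr k) (Sum.inr l) (h22 k l)
end

section
/- Let ρ_A be a 2×2 complex matrix with real entries satisfying ρ_Aᵀ = ρ_A, and let χ be a 6×6 complex Hermitian matrix written in 3×3 blocks as χ = [[P, Q],[Qᴴ, R]] with P and R real symmetric and Q complex symmetric (Qᵀ = Q), such that both χ + (i/2)·(ρ_A ⊗ J̃) and χ − (i/2)·(ρ_A ⊗ J̃) are positive semidefinite. Define χ̄ := (χ + χ^{T_A})/2, where χ^{T_A} = [[P, Qᴴ],[Q, R]] is the partial transpose with respect to the block index. Then χ̄ is Hermitian, invariant under the partial transpose (χ̄^{T_A} = χ̄), has the same diagonal 3×3 blocks P and R as χ and the same (1,4) and (4,1) entries as χ whenever the (1,1) entry of Q is real, and both χ̄ + (i/2)·(ρ_A ⊗ J̃) and χ̄ − (i/2)·(ρ_A ⊗ J̃) are positive semidefinite. -/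
open Matrix
open scoped ComplexOrder

/-- The partial transpose of a 6×6 matrix (written in 3×3 blocks) with respect to
the first (block) factor: the off-diagonal blocks are swapped. -/
def partialTransposeA (M : Matrix (Fin 3 ⊕ Fin 3) (Fin 3 ⊕ Fin 3) ℂ) :
    Matrix (Fin 3 ⊕ Fin 3) (Fin 3 ⊕ Fin 3) ℂ :=
  Matrix.fromBlocks M.toBlocks₁₁ M.toBlocks₂₁ M.toBlocks₁₂ M.toBlocks₂₂

lemma psd_half_smul {n : Type*} [Fintype n] {M : Matrix n n ℂ}
    (hM : M.PosSemidef) : ((2 : ℂ)⁻¹ • M).PosSemidef := by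
  constructor
  · have h1 := hM.1
    unfold Matrix.IsHermitian at *
    rw [Matrix.conjTranspose_smul, h1]
    norm_num
  · intro x
    have h2 := hM.2 x
    have hc : (0:ℂ) ≤ (2:ℂ)⁻¹ := by
      rw [Complex.le_def]; norm_num
    have he : (x.sum fun i xi => x.sum fun j xj => star xi * ((2:ℂ)⁻¹ • M) i j * xj) =
        (2:ℂ)⁻¹ * (x.sum fun i xi => x.sum fun j xj => star xi * M i j * xj) := by
      rw [Finsupp.mul_sum]
      refine Finsupp.sum_congr fun i _ => ?_
      rw [Finsupp.mul_sum]
      refine Finsupp.sum_congr fun j _ => ?_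
      simp only [Matrix.smul_apply, smul_eq_mul]
      ring
    rw [he]
    exact mul_nonneg hc h2

lemma tct {m n : Type*} (M : Matrix m n ℂ) : Mᵀᴴ = Mᴴᵀ := by
  ext i j
  simp [Matrix.conjTranspose_apply, Matrix.transpose_apply]

/-- Lemma 2, matrix form: For `χ = [[P, Q],[Qᴴ, R]]` with `P`, `R`
real symmetric, `Q` complex symmetric, `ρ_A` real symmetric and
`χ ± (i/2)·(ρ_A ⊗ J̃) ≥ 0`, the matrix `χ̄ := (χ + χ^{T_A})/2` is Hermitian,
invariant under the partial transpose, has the same diagonal blocks `P`, `R`,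
has the same (1,4) and (4,1) entries as `χ` whenever `Q₁₁` is real, and
satisfies `χ̄ ± (i/2)·(ρ_A ⊗ J̃) ≥ 0`. -/
theorem ppt_symmetrized_solution
    (ρA : Matrix (Fin 2) (Fin 2) ℂ)
    (hreal : ∀ i j, (ρA i j).im = 0) (hsym : ρAᵀ = ρA)
    (Jt : Matrix (Fin 3) (Fin 3) ℂ)
    (hJ : Jt = !![0, 0, 0; 0, 0, -1; 0, 1, 0])
    (P R Q : Matrix (Fin 3) (Fin 3) ℂ)
    (hPreal : ∀ i j, (P i j).im = 0) (hPsym : Pᵀ = P)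
    (hRreal : ∀ i j, (R i j).im = 0) (hRsym : Rᵀ = R)
    (hQsym : Qᵀ = Q)
    (χ : Matrix (Fin 3 ⊕ Fin 3) (Fin 3 ⊕ Fin 3) ℂ)
    (hχ : χ = Matrix.fromBlocks P Q Qᴴ R)
    (hplus : (χ + (Complex.I / 2) • kronBlock ρA Jt).PosSemidef)
    (hminus : (χ - (Complex.I / 2) • kronBlock ρA Jt).PosSemidef)
    (χbar : Matrix (Fin 3 ⊕ Fin 3) (Fin 3 ⊕ Fin 3) ℂ)
    (hχbar : χbar = (2 : ℂ)⁻¹ • (χ + partialTransposeA χ)) :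
    χbar.IsHermitian ∧
    partialTransposeA χbar = χbar ∧
    χbar.toBlocks₁₁ = P ∧ χbar.toBlocks₂₂ = R ∧
    ((Q 0 0).im = 0 →
      χbar (Sum.inl 0) (Sum.inr 0) = χ (Sum.inl 0) (Sum.inr 0) ∧
      χbar (Sum.inr 0) (Sum.inl 0) = χ (Sum.inr 0) (Sum.inl 0)) ∧
    (χbar + (Complex.I / 2) • kronBlock ρA Jt).PosSemidef ∧
    (χbar - (Complex.I / 2) • kronBlock ρA Jt).PosSemidef := by
  have hstar : ∀ z : ℂ, z.im = 0 → star z = z := fun z h => by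
    rw [Complex.star_def]; exact Complex.conj_eq_iff_im.mpr h
  have hPH : Pᴴ = P := by
    ext i j
    rw [Matrix.conjTranspose_apply, hstar _ (hPreal j i)]
    exact congrFun (congrFun hPsym i) j
  have hRH : Rᴴ = R := by
    ext i j
    rw [Matrix.conjTranspose_apply, hstar _ (hRreal j i)]
    exact congrFun (congrFun hRsym i) j
  have hQHT : (Qᴴ)ᵀ = Qᴴ := by
    rw [← tct, hQsym]
  have hχH : χ.IsHermitian := by
    unfold Matrix.IsHermitian
    rw [hχ, Matrix.fromBlocks_conjTranspose, hPH, hRH, Matrix.conjTranspose_conjTranspose]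
  have hχT : χᵀ = Matrix.fromBlocks P Qᴴ Q R := by
    rw [hχ, Matrix.fromBlocks_transpose, hPsym, hRsym, hQsym, hQHT]
  have hPT : partialTransposeA χ = χᵀ := by
    rw [hχT]
    unfold partialTransposeA
    rw [hχ]
    simp only [Matrix.toBlocks_fromBlocks₁₁, Matrix.toBlocks_fromBlocks₁₂,
      Matrix.toBlocks_fromBlocks₂₁, Matrix.toBlocks_fromBlocks₂₂]
  have hχbar' : χbar = (2 : ℂ)⁻¹ • (χ + χᵀ) := by rw [hχbar, hPT]
  have hJT : Jtᵀ = -Jt := by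
    rw [hJ]
    ext i j
    fin_cases i <;> fin_cases j <;> simp [Matrix.transpose_apply] <;> rfl
  have hρ10 : ρA 1 0 = ρA 0 1 := by
    have h := congrFun (congrFun hsym 0) 1
    rwa [Matrix.transpose_apply] at h
  have hKT : (kronBlock ρA Jt)ᵀ = -(kronBlock ρA Jt) := by
    unfold kronBlock
    rw [Matrix.fromBlocks_transpose, Matrix.fromBlocks_neg]
    simp only [Matrix.transpose_smul, hJT, smul_neg, hρ10]
  have hplusT : (χᵀ + (Complex.I / 2) • kronBlock ρA Jt).PosSemidef := by
    have h := hminus.transpose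
    rwa [Matrix.transpose_sub, Matrix.transpose_smul, hKT, smul_neg,
      sub_neg_eq_add] at h
  have hminusT : (χᵀ - (Complex.I / 2) • kronBlock ρA Jt).PosSemidef := by
    have h := hplus.transpose
    rwa [Matrix.transpose_add, Matrix.transpose_smul, hKT, smul_neg,
      ← sub_eq_add_neg] at h
  have hχTH : (χᵀ)ᴴ = χᵀ := by rw [tct, hχH.eq]
  refine ⟨?_, ?_, ?_, ?_, ?_, ?_, ?_⟩
  · unfold Matrix.IsHermitian
    rw [hχbar', Matrix.conjTranspose_smul, Matrix.conjTranspose_add, hχH.eq, hχTH]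
    congr 1
    simp
  · have hPTT : partialTransposeA (χᵀ) = χ := by
      rw [hχT]
      unfold partialTransposeA
      simp only [Matrix.toBlocks_fromBlocks₁₁, Matrix.toBlocks_fromBlocks₁₂,
        Matrix.toBlocks_fromBlocks₂₁, Matrix.toBlocks_fromBlocks₂₂]
      rw [hχ]
    have hlin : ∀ (A B : Matrix (Fin 3 ⊕ Fin 3) (Fin 3 ⊕ Fin 3) ℂ) (c : ℂ),
        partialTransposeA (c • (A + B)) =
          c • (partialTransposeA A + partialTransposeA B) := by
      intro A B c
      unfold partialTransposeA
      ext i j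
      cases i <;> cases j <;>
        simp [Matrix.toBlocks₁₁, Matrix.toBlocks₁₂, Matrix.toBlocks₂₁,
          Matrix.toBlocks₂₂, Matrix.fromBlocks]
    rw [hχbar, hlin, hPT, hPTT, add_comm]
  · ext i j
    have hP : P j i = P i j := (congrFun (congrFun hPsym j) i).symm
    simp [hχbar', Matrix.toBlocks₁₁, Matrix.smul_apply, Matrix.add_apply,
      Matrix.transpose_apply, hχ, Matrix.fromBlocks_apply₁₁, hP]
    ring
  · ext i j
    have hR : R j i = R i j := (congrFun (congrFun hRsym j) i).symm
    simp [hχbar', Matrix.toBlocks₂₂, Matrix.smul_apply, Matrix.add_apply,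
      Matrix.transpose_apply, hχ, Matrix.fromBlocks_apply₂₂, hR]
    ring
  · intro hQ00
    have hc : star (Q 0 0) = Q 0 0 := hstar _ hQ00
    constructor
    · rw [hχbar', hχ]
      simp [Matrix.smul_apply, Matrix.add_apply, Matrix.transpose_apply,
        Matrix.fromBlocks_apply₁₂, Matrix.fromBlocks_apply₂₁,
        Matrix.conjTranspose_apply, hc]
      ring
    · rw [hχbar', hχ]
      have hQT : Q 0 0 = Qᵀ 0 0 := (congrFun (congrFun hQsym 0) 0).symm
      rw [Matrix.transpose_apply] at hQT
      simp [Matrix.smul_apply, Matrix.add_apply, Matrix.transpose_apply,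
        Matrix.fromBlocks_apply₁₂, Matrix.fromBlocks_apply₂₁,
        Matrix.conjTranspose_apply, hc, ← hQT]
      ring
  · have heq : χbar + (Complex.I / 2) • kronBlock ρA Jt =
        (2 : ℂ)⁻¹ • ((χ + (Complex.I / 2) • kronBlock ρA Jt) +
          (χᵀ + (Complex.I / 2) • kronBlock ρA Jt)) := by
      rw [hχbar']
      ext i j
      simp [Matrix.add_apply, Matrix.smul_apply]
      ring
    rw [heq]
    exact psd_half_smul (hplus.add hplusT)
  · have heq : χbar - (Complex.I / 2) • kronBlock ρA Jt =
        (2 : ℂ)⁻¹ • ((χ - (Complex.I / 2) • kronBlock ρA Jt) +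
          (χᵀ - (Complex.I / 2) • kronBlock ρA Jt)) := by
      rw [hχbar']
      ext i j
      simp [Matrix.add_apply, Matrix.sub_apply, Matrix.smul_apply]
      ring
    rw [heq]
    exact psd_half_smul (hminus.add hminusT)
end
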